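/- Let Q be the cyclic quiver with vertex set ℤ/n (n ≥ 1) and arrows a_i : i → i+1, and let Λ = KQ/(KQ)_{≥2} be its quotient by all paths of length 2, over a field K. Let μ̄ be the algebra automorphism of Λ fixing K-linearly determined by μ̄(e_i) = e_{i+1} and μ̄(a_i) = -a_{i+1}. Then the kernel of the multiplication map ⊕_{i∈ℤ/n} Λe_i ⊗ e_iΛ → Λ is generated as a Λ-bimodule by the elements x_i = a_i ⊗ e_{i+1} - e_i ⊗ a_i, equals ⊕_i Λx_i = ⊕_i x_iΛ, and is isomorphic as a Λ-bimodule to the twisted bimodule _{μ̄}Λ_1. -/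

import Mathlib

open TensorProduct

/-- Left multiplication by `b` on the first tensor factor of `Λ ⊗[K] Λ`
(the left action of the `Λ`-bimodule `Λ ⊗ Λ`). -/
noncomputable def lAct (K Λ : Type*) [CommRing K] [Ring Λ] [Algebra K Λ] (b : Λ) :
    TensorProduct K Λ Λ →ₗ[K] TensorProduct K Λ Λ :=
  LinearMap.rTensor Λ (LinearMap.mulLeft K b)

/-- Right multiplication by `b` on the second tensor factor of `Λ ⊗[K] Λ`
(the right action of the `Λ`-bimodule `Λ ⊗ Λ`). -/
noncomputable def rAct (K Λ : Type*) [CommRing K] [Ring Λ] [Algebra K Λ] (b : Λ) :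
    TensorProduct K Λ Λ →ₗ[K] TensorProduct K Λ Λ :=
  LinearMap.lTensor Λ (LinearMap.mulRight K b)

/-- for the truncated cyclic quiver algebra `Λ = KQ/(KQ)_{≥2}` with
vertices `e i` (`i ∈ ℤ/n`) and arrows `a i : i → i+1`, the kernel of the multiplication
map `⊕_i Λe_i ⊗ e_iΛ → Λ` is generated as a `Λ`-bimodule by the elements
`x_i = a_i ⊗ e_{i+1} - e_i ⊗ a_i`, equals `⊕_i Λx_i = ⊕_i x_iΛ`, and is isomorphic as a
`Λ`-bimodule to the twisted bimodule `_{μ̄}Λ_1`, where `μ̄(e_i) = e_{i+1}`,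
`μ̄(a_i) = -a_{i+1}`. -/
theorem stmt_15 (K : Type*) [Field K] (n : ℕ) [NeZero n] (hn : 1 ≤ n)
    (Λ : Type*) [Ring Λ] [Algebra K Λ]
    (e a : ZMod n → Λ)
    (bas : Module.Basis (ZMod n ⊕ ZMod n) K Λ)
    (hbas : ∀ i, bas (Sum.inl i) = e i ∧ bas (Sum.inr i) = a i)
    (hee : ∀ i j, e i * e j = if i = j then e i else 0)
    (hea : ∀ i j, e i * a j = if i = j then a j else 0)
    (hae : ∀ i j, a i * e j = if j = i + 1 then a i else 0)
    (haa : ∀ i j, a i * a j = 0)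
    (hone : (∑ i, e i) = 1)
    (μbar : Λ ≃ₐ[K] Λ)
    (hμe : ∀ i, μbar (e i) = e (i + 1))
    (hμa : ∀ i, μbar (a i) = -(a (i + 1)))
    (x : ZMod n → TensorProduct K Λ Λ)
    (hx : ∀ i, x i = a i ⊗ₜ[K] e (i + 1) - e i ⊗ₜ[K] a i)
    (Ker : Submodule K (TensorProduct K Λ Λ))
    (hKer : Ker =
      Submodule.span K {t | ∃ b c i, t = lAct K Λ b (rAct K Λ c (e i ⊗ₜ[K] e i))} ⊓
        LinearMap.ker (LinearMap.mul' K Λ)) :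
    Ker = Submodule.span K {t | ∃ b c i, t = lAct K Λ b (rAct K Λ c (x i))} ∧
    Ker = Submodule.span K {t | ∃ b i, t = lAct K Λ b (x i)} ∧
    Ker = Submodule.span K {t | ∃ c i, t = rAct K Λ c (x i)} ∧
    iSupIndep
      (fun i => Submodule.span K {t | ∃ b, t = lAct K Λ b (x i)}) ∧
    iSupIndep
      (fun i => Submodule.span K {t | ∃ c, t = rAct K Λ c (x i)}) ∧
    ∃ g : Λ →ₗ[K] TensorProduct K Λ Λ,
      Function.Injective g ∧ LinearMap.range g = Ker ∧
      (∀ b y, g (μbar b * y) = lAct K Λ b (g y)) ∧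
      (∀ b y, g (y * b) = rAct K Λ b (g y)) := by
  classical
  classical
  have hbe : ∀ i, bas (Sum.inl i) = e i := fun i => (hbas i).1
  have hba : ∀ i, bas (Sum.inr i) = a i := fun i => (hbas i).2
  -- L1
  have L1 : ∀ (b : Λ) (i : ZMod n), b * a i = bas.repr b (Sum.inl i) • a i := by
    intro b i
    conv_lhs => rw [← bas.sum_repr b]
    rw [Finset.sum_mul, Fintype.sum_sum_type]
    simp only [hbe, hba, smul_mul_assoc, hea, haa, smul_zero, Finset.sum_const_zero, add_zero,
      smul_ite, Finset.sum_ite_eq', Finset.mem_univ, if_true]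
  have L2 : ∀ (b : Λ) (i : ZMod n), b * e i
      = bas.repr b (Sum.inl i) • e i + bas.repr b (Sum.inr (i-1)) • a (i-1) := by
    intro b i
    conv_lhs => rw [← bas.sum_repr b]
    rw [Finset.sum_mul, Fintype.sum_sum_type]
    congr 1
    · simp only [hbe, smul_mul_assoc, hee, smul_ite, smul_zero, Finset.sum_ite_eq',
        Finset.mem_univ, if_true]
    · simp only [hba, smul_mul_assoc, hae, smul_ite, smul_zero]
      have key : ∀ x : ZMod n, (i = x + 1) ↔ (x = i - 1) := fun x =>
        ⟨fun h => by rw [h]; ring, fun h => by rw [h]; ring⟩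
      simp only [key, Finset.sum_ite_eq', Finset.mem_univ, if_true]
  have L3 : ∀ (b : Λ) (i : ZMod n), a i * b = bas.repr b (Sum.inl (i+1)) • a i := by
    intro b i
    conv_lhs => rw [← bas.sum_repr b]
    rw [Finset.mul_sum, Fintype.sum_sum_type]
    simp only [hbe, hba, mul_smul_comm, hae, haa, smul_zero, Finset.sum_const_zero, add_zero,
      smul_ite, Finset.sum_ite_eq', Finset.mem_univ, if_true]
  have L4 : ∀ (b : Λ) (i : ZMod n), e i * b
      = bas.repr b (Sum.inl i) • e i + bas.repr b (Sum.inr i) • a i := by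
    intro b i
    conv_lhs => rw [← bas.sum_repr b]
    rw [Finset.mul_sum, Fintype.sum_sum_type]
    congr 1
    · simp only [hbe, mul_smul_comm, hee, smul_ite, smul_zero, Finset.sum_ite_eq,
        Finset.mem_univ, if_true]
    · simp only [hba, mul_smul_comm, hea, smul_ite, smul_zero, Finset.sum_ite_eq,
        Finset.mem_univ, if_true]
  have lAct_tmul : ∀ (b u v : Λ), lAct K Λ b (u ⊗ₜ[K] v) = (b * u) ⊗ₜ[K] v := by
    intro b u v; simp [lAct]
  have rAct_tmul : ∀ (c u v : Λ), rAct K Λ c (u ⊗ₜ[K] v) = u ⊗ₜ[K] (v * c) := by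
    intro c u v; simp [rAct]
  have F1 : ∀ (b : Λ) (i : ZMod n), lAct K Λ b (x i)
      = bas.repr b (Sum.inl i) • x i - bas.repr b (Sum.inr (i-1)) • (a (i-1) ⊗ₜ[K] a i) := by
    intro b i
    rw [hx i, map_sub, lAct_tmul, lAct_tmul, L1, L2]
    simp only [smul_tmul', add_tmul, smul_sub]
    abel
  have F2 : ∀ (c : Λ) (i : ZMod n), rAct K Λ c (x i)
      = bas.repr c (Sum.inl (i+1)) • x i + bas.repr c (Sum.inr (i+1)) • (a i ⊗ₜ[K] a (i+1)) := by
    intro c i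
    rw [hx i, map_sub, rAct_tmul, rAct_tmul, L3, L4]
    simp only [tmul_add, tmul_smul, smul_sub]
    abel
  have F3 : ∀ (b : Λ) (i : ZMod n), lAct K Λ b (a i ⊗ₜ[K] a (i+1))
      = bas.repr b (Sum.inl i) • (a i ⊗ₜ[K] a (i+1)) := by
    intro b i
    rw [lAct_tmul, L1, smul_tmul']
  have F4 : ∀ (c : Λ) (i : ZMod n), rAct K Λ c (a i ⊗ₜ[K] a (i+1))
      = bas.repr c (Sum.inl (i+2)) • (a i ⊗ₜ[K] a (i+1)) := by
    intro c i
    rw [rAct_tmul, L3, tmul_smul]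
    congr 2
    ring
  have hre : ∀ i, bas.repr (e i) = Finsupp.single (Sum.inl i) (1:K) := by
    intro i; rw [← hbe]; exact bas.repr_self _
  have hra : ∀ i, bas.repr (a i) = Finsupp.single (Sum.inr i) (1:K) := by
    intro i; rw [← hba]; exact bas.repr_self _
  have hm1 : ∀ i : ZMod n, i - 1 + 1 = i := fun i => by ring
  have hp1 : ∀ i : ZMod n, i + 1 - 1 = i := fun i => by ring
  have E1 : ∀ i, lAct K Λ (e i) (x i) = x i := by
    intro i
    rw [F1, hre]
    simp [Finsupp.single_apply]
  have E2 : ∀ i, lAct K Λ (-(a i)) (x (i+1)) = a i ⊗ₜ[K] a (i+1) := by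
    intro i
    rw [F1, map_neg, hra, hp1]
    simp [Finsupp.single_apply]
  have E3 : ∀ i, rAct K Λ (e (i+1)) (x i) = x i := by
    intro i
    rw [F2, hre]
    simp [Finsupp.single_apply]
  have E4 : ∀ i, rAct K Λ (a (i+1)) (x i) = a i ⊗ₜ[K] a (i+1) := by
    intro i
    rw [F2, hra]
    simp [Finsupp.single_apply]
  have E5 : ∀ i, lAct K Λ (e i) (a i ⊗ₜ[K] a (i+1)) = a i ⊗ₜ[K] a (i+1) := by
    intro i
    rw [F3, hre]
    simp [Finsupp.single_apply]
  set M : Submodule K (TensorProduct K Λ Λ) :=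
    Submodule.span K ((Set.range x) ∪ (Set.range fun i => a i ⊗ₜ[K] a (i+1))) with hM
  have hxM : ∀ i, x i ∈ M := fun i =>
    Submodule.subset_span (Set.mem_union_left _ ⟨i, rfl⟩)
  have hyM : ∀ i, a i ⊗ₜ[K] a (i+1) ∈ M := fun i =>
    Submodule.subset_span (Set.mem_union_right _ ⟨i, rfl⟩)
  have hyM' : ∀ i, a (i-1) ⊗ₜ[K] a i ∈ M := fun i => by
    have h := hyM (i-1); rwa [hm1] at h
  have stabL : ∀ (b : Λ) (z : TensorProduct K Λ Λ), z ∈ M → lAct K Λ b z ∈ M := by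
    intro b z hz
    have hle : M.map (lAct K Λ b) ≤ M := by
      rw [hM, Submodule.map_span_le]
      rintro m (⟨i, rfl⟩ | ⟨i, rfl⟩)
      · rw [F1]
        exact sub_mem (Submodule.smul_mem _ _ (hxM i)) (Submodule.smul_mem _ _ (hyM' i))
      · rw [F3]
        exact Submodule.smul_mem _ _ (hyM i)
    exact hle (Submodule.mem_map_of_mem hz)
  have stabR : ∀ (b : Λ) (z : TensorProduct K Λ Λ), z ∈ M → rAct K Λ b z ∈ M := by
    intro b z hz
    have hle : M.map (rAct K Λ b) ≤ M := by
      rw [hM, Submodule.map_span_le]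
      rintro m (⟨i, rfl⟩ | ⟨i, rfl⟩)
      · rw [F2]
        exact add_mem (Submodule.smul_mem _ _ (hxM i)) (Submodule.smul_mem _ _ (hyM i))
      · rw [F4]
        exact Submodule.smul_mem _ _ (hyM i)
    exact hle (Submodule.mem_map_of_mem hz)
  -- the three span descriptions all equal M
  have hSbc : Submodule.span K {t | ∃ b c i, t = lAct K Λ b (rAct K Λ c (x i))} = M := by
    apply le_antisymm
    · rw [Submodule.span_le]
      rintro t ⟨b, c, i, rfl⟩
      exact stabL b _ (stabR c _ (hxM i))
    · rw [hM, Submodule.span_le]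
      rintro t (⟨i, rfl⟩ | ⟨i, rfl⟩)
      · exact Submodule.subset_span ⟨e i, e (i+1), i, by rw [E3, E1]⟩
      · exact Submodule.subset_span ⟨e i, a (i+1), i, by rw [E4, E5]⟩
  have hSb : Submodule.span K {t | ∃ b i, t = lAct K Λ b (x i)} = M := by
    apply le_antisymm
    · rw [Submodule.span_le]
      rintro t ⟨b, i, rfl⟩
      exact stabL b _ (hxM i)
    · rw [hM, Submodule.span_le]
      rintro t (⟨i, rfl⟩ | ⟨i, rfl⟩)
      · exact Submodule.subset_span ⟨e i, i, (E1 i).symm⟩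
      · exact Submodule.subset_span ⟨-(a i), i+1, (E2 i).symm⟩
  have hSc : Submodule.span K {t | ∃ c i, t = rAct K Λ c (x i)} = M := by
    apply le_antisymm
    · rw [Submodule.span_le]
      rintro t ⟨c, i, rfl⟩
      exact stabR c _ (hxM i)
    · rw [hM, Submodule.span_le]
      rintro t (⟨i, rfl⟩ | ⟨i, rfl⟩)
      · exact Submodule.subset_span ⟨e (i+1), i, (E3 i).symm⟩
      · exact Submodule.subset_span ⟨a (i+1), i, (E4 i).symm⟩
  -- the auxiliary complement V
  set v : (ZMod n ⊕ ZMod n) → TensorProduct K Λ Λ :=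
    Sum.elim (fun i => e i ⊗ₜ[K] e i) (fun i => e i ⊗ₜ[K] a i) with hv
  have hmulv : ∀ j, LinearMap.mul' K Λ (v j) = bas j := by
    rintro (i | i) <;> simp [hv, LinearMap.mul'_apply, hee, hea, hbe, hba]
  have hVinj : ∀ w ∈ Submodule.span K (Set.range v), LinearMap.mul' K Λ w = 0 → w = 0 := by
    intro w hw h0
    obtain ⟨c, rfl⟩ := (Submodule.mem_span_range_iff_exists_fun K).mp hw
    have hsum : ∑ j, c j • bas j = 0 := by
      rw [← h0, map_sum]
      simp [hmulv]
    have hc : ∀ j, c j = 0 := Fintype.linearIndependent_iff.mp bas.linearIndependent c hsum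
    simp [hc]
  have hMker : M ≤ LinearMap.ker (LinearMap.mul' K Λ) := by
    rw [hM, Submodule.span_le]
    rintro t (⟨i, rfl⟩ | ⟨i, rfl⟩) <;>
      simp [LinearMap.mem_ker, hx, LinearMap.mul'_apply, hae, hea, haa]
  have hMS0 : M ≤ Submodule.span K {t | ∃ b c i, t = lAct K Λ b (rAct K Λ c (e i ⊗ₜ[K] e i))} := by
    rw [hM, Submodule.span_le]
    rintro t (⟨i, rfl⟩ | ⟨i, rfl⟩)
    · rw [hx]
      refine sub_mem ?_ ?_
      · refine Submodule.subset_span ⟨a i, e (i+1), i+1, ?_⟩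
        rw [rAct_tmul, lAct_tmul, hee, hae]
        simp
      · refine Submodule.subset_span ⟨e i, a i, i, ?_⟩
        rw [rAct_tmul, lAct_tmul, hee, hea]
        simp
    · refine Submodule.subset_span ⟨a i, a (i+1), i+1, ?_⟩
      rw [rAct_tmul, lAct_tmul, hea, hae]
      simp
  have hS0MV : Submodule.span K {t | ∃ b c i, t = lAct K Λ b (rAct K Λ c (e i ⊗ₜ[K] e i))}
      ≤ M ⊔ Submodule.span K (Set.range v) := by
    rw [Submodule.span_le]
    rintro t ⟨b, c, i, rfl⟩
    rw [rAct_tmul, lAct_tmul]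
    have expand : (b * e i) ⊗ₜ[K] (e i * c)
        = (bas.repr b (Sum.inl i) * bas.repr c (Sum.inl i)) • (e i ⊗ₜ[K] e i)
          + (bas.repr b (Sum.inl i) * bas.repr c (Sum.inr i)) • (e i ⊗ₜ[K] a i)
          + (bas.repr b (Sum.inr (i-1)) * bas.repr c (Sum.inl i)) • (a (i-1) ⊗ₜ[K] e i)
          + (bas.repr b (Sum.inr (i-1)) * bas.repr c (Sum.inr i)) • (a (i-1) ⊗ₜ[K] a i) := by
      rw [L2, L4]
      simp only [add_tmul, tmul_add, ← smul_tmul', tmul_smul, smul_add, smul_smul]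
      module
    rw [expand]
    have memee : e i ⊗ₜ[K] e i ∈ M ⊔ Submodule.span K (Set.range v) :=
      le_sup_right (α := Submodule K (TensorProduct K Λ Λ))
        (Submodule.subset_span ⟨Sum.inl i, rfl⟩)
    have memea : e i ⊗ₜ[K] a i ∈ M ⊔ Submodule.span K (Set.range v) :=
      le_sup_right (α := Submodule K (TensorProduct K Λ Λ))
        (Submodule.subset_span ⟨Sum.inr i, rfl⟩)
    have memea' : e (i-1) ⊗ₜ[K] a (i-1) ∈ M ⊔ Submodule.span K (Set.range v) :=
      le_sup_right (α := Submodule K (TensorProduct K Λ Λ))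
        (Submodule.subset_span ⟨Sum.inr (i-1), rfl⟩)
    have memae : a (i-1) ⊗ₜ[K] e i ∈ M ⊔ Submodule.span K (Set.range v) := by
      have hxi : a (i-1) ⊗ₜ[K] e i = x (i-1) + e (i-1) ⊗ₜ[K] a (i-1) := by
        rw [hx (i-1), hm1]
        abel
      rw [hxi]
      exact add_mem (le_sup_left (α := Submodule K (TensorProduct K Λ Λ)) (hxM (i-1))) memea'
    have memaa : a (i-1) ⊗ₜ[K] a i ∈ M ⊔ Submodule.span K (Set.range v) :=
      le_sup_left (α := Submodule K (TensorProduct K Λ Λ)) (hyM' i)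
    exact add_mem (add_mem (add_mem (Submodule.smul_mem _ _ memee) (Submodule.smul_mem _ _ memea))
      (Submodule.smul_mem _ _ memae)) (Submodule.smul_mem _ _ memaa)
  have hKerM : Ker = M := by
    apply le_antisymm
    · intro t ht
      rw [hKer] at ht
      obtain ⟨htS0, htker⟩ := ht
      obtain ⟨m, hm, w, hw, rfl⟩ := Submodule.mem_sup.mp (hS0MV htS0)
      have hmul0 : LinearMap.mul' K Λ (m + w) = 0 := htker
      have hmulm : LinearMap.mul' K Λ m = 0 := hMker hm
      have hmulw : LinearMap.mul' K Λ w = 0 := by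
        rw [map_add, hmulm, zero_add] at hmul0
        exact hmul0
      rw [hVinj w hw hmulw, add_zero]
      exact hm
    · rw [hKer]
      exact le_inf hMS0 hMker
  -- basis of the tensor product and support submodules
  set B : Module.Basis ((ZMod n ⊕ ZMod n) × (ZMod n ⊕ ZMod n)) K (TensorProduct K Λ Λ) :=
    Module.Basis.tensorProduct bas bas with hB
  have hBapp : ∀ p q, B (p, q) = bas p ⊗ₜ[K] bas q := fun p q => by
    rw [hB, Module.Basis.tensorProduct_apply]
  have hBx : ∀ i, x i = B (Sum.inr i, Sum.inl (i+1)) - B (Sum.inl i, Sum.inr i) := by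
    intro i
    rw [hx, hBapp, hBapp]; simp only [hbe, hba]
  have hBy : ∀ i, a i ⊗ₜ[K] a (i+1) = B (Sum.inr i, Sum.inr (i+1)) := by
    intro i
    rw [hBapp]; simp only [hba]
  have hBy' : ∀ i, a (i-1) ⊗ₜ[K] a i = B (Sum.inr (i-1), Sum.inr i) := by
    intro i
    have h := hBy (i-1); rwa [hm1] at h
  set W : Set ((ZMod n ⊕ ZMod n) × (ZMod n ⊕ ZMod n)) → Submodule K (TensorProduct K Λ Λ) :=
    fun A => Submodule.comap (B.repr : TensorProduct K Λ Λ →ₗ[K] _)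
      (Finsupp.supported K K A) with hW
  have hWmem : ∀ (A : Set _) (z : TensorProduct K Λ Λ),
      z ∈ W A ↔ ∀ k ∉ A, B.repr z k = 0 := by
    intro A z
    rw [hW]
    simp only [Submodule.mem_comap, LinearEquiv.coe_coe]
    exact Finsupp.mem_supported' K _
  have hWB : ∀ (A : Set _) p, p ∈ A → B p ∈ W A := by
    intro A p hp
    rw [hWmem]
    intro k hk
    rw [B.repr_self, Finsupp.single_apply]
    rw [if_neg]
    intro h; exact hk (h ▸ hp)
  have hWx : ∀ (A : Set _) i, (Sum.inr i, Sum.inl (i+1)) ∈ A → (Sum.inl i, Sum.inr i) ∈ A →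
      x i ∈ W A := by
    intro A i h1 h2
    rw [hBx]
    exact sub_mem (hWB A _ h1) (hWB A _ h2)
  have hWy : ∀ (A : Set _) i, (Sum.inr i, Sum.inr (i+1)) ∈ A → a i ⊗ₜ[K] a (i+1) ∈ W A := by
    intro A i h1
    rw [hBy]
    exact hWB A _ h1
  have hWdisj : ∀ (A A' : Set _), (∀ k, k ∈ A → k ∉ A') → Disjoint (W A) (W A') := by
    intro A A' hAA'
    rw [Submodule.disjoint_def]
    intro z hz hz'
    rw [hWmem] at hz hz'
    have : B.repr z = 0 := by
      ext k
      by_cases hk : k ∈ A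
      · exact hz' k (hAA' k hk)
      · exact hz k hk
    simpa using congrArg B.repr.symm this
  have hWmono : ∀ (A A' : Set _), A ⊆ A' → W A ≤ W A' := fun A A' h =>
    Submodule.comap_mono (Finsupp.supported_mono h)
  have indep_of : ∀ (A : ZMod n → Set ((ZMod n ⊕ ZMod n) × (ZMod n ⊕ ZMod n))),
      (∀ i j, i ≠ j → ∀ k ∈ A i, k ∉ A j) →
      ∀ (P : ZMod n → Submodule K (TensorProduct K Λ Λ)),
      (∀ i, P i ≤ W (A i)) → iSupIndep P := by
    intro A hA P hP
    rw [iSupIndep_def]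
    intro i
    have h1 : P i ≤ W (A i) := hP i
    have h2 : (⨆ (j) (_ : j ≠ i), P j) ≤ W (⋃ j ∈ {j | j ≠ i}, A j) := by
      refine iSup₂_le fun j hj => (hP j).trans (hWmono _ _ ?_)
      exact Set.subset_biUnion_of_mem hj
    refine Disjoint.mono h1 h2 (hWdisj _ _ ?_)
    intro k hk hk'
    obtain ⟨j, hj, hkj⟩ := by simpa using hk'
    exact hA i j (Ne.symm hj) k hk hkj
  set AL : ZMod n → Set ((ZMod n ⊕ ZMod n) × (ZMod n ⊕ ZMod n)) := fun i =>
    {(Sum.inr i, Sum.inl (i+1)), (Sum.inl i, Sum.inr i), (Sum.inr (i-1), Sum.inr i)} with hAL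
  set AR : ZMod n → Set ((ZMod n ⊕ ZMod n) × (ZMod n ⊕ ZMod n)) := fun i =>
    {(Sum.inr i, Sum.inl (i+1)), (Sum.inl i, Sum.inr i), (Sum.inr i, Sum.inr (i+1))} with hAR
  have indepL : iSupIndep (fun i => Submodule.span K {t | ∃ b, t = lAct K Λ b (x i)}) := by
    refine indep_of AL ?_ _ ?_
    · intro i j hij k hki hkj
      rw [hAL] at hki hkj
      simp only [Set.mem_insert_iff, Set.mem_singleton_iff] at hki hkj
      rcases hki with rfl | rfl | rfl <;>
        (simp only [Prod.mk.injEq, Sum.inl.injEq, Sum.inr.injEq, reduceCtorEq, false_and,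
          and_false, or_false, false_or, add_left_inj, sub_left_inj, and_self] at hkj;
         exact hij hkj)
    · intro i
      rw [Submodule.span_le]
      rintro t ⟨b, rfl⟩
      rw [F1]
      refine sub_mem (Submodule.smul_mem _ _ (hWx _ i ?_ ?_)) (Submodule.smul_mem _ _ ?_)
      · rw [hAL]; left; rfl
      · rw [hAL]; right; left; rfl
      · have h := hWy (AL i) (i-1)
        rw [hm1] at h
        exact h (by rw [hAL]; right; right; rfl)
  have indepR : iSupIndep (fun i => Submodule.span K {t | ∃ c, t = rAct K Λ c (x i)}) := by
    refine indep_of AR ?_ _ ?_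
    · intro i j hij k hki hkj
      rw [hAR] at hki hkj
      simp only [Set.mem_insert_iff, Set.mem_singleton_iff] at hki hkj
      rcases hki with rfl | rfl | rfl <;>
        (simp only [Prod.mk.injEq, Sum.inl.injEq, Sum.inr.injEq, reduceCtorEq, false_and,
          and_false, or_false, false_or, add_left_inj, sub_left_inj, and_self] at hkj;
         exact hij hkj)
    · intro i
      rw [Submodule.span_le]
      rintro t ⟨c, rfl⟩
      rw [F2]
      refine add_mem (Submodule.smul_mem _ _ (hWx _ i ?_ ?_)) (Submodule.smul_mem _ _ (hWy _ i ?_))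
      · rw [hAR]; left; rfl
      · rw [hAR]; right; left; rfl
      · rw [hAR]; right; right; rfl
  -- the map g
  set g0 : (ZMod n ⊕ ZMod n) → TensorProduct K Λ Λ :=
    Sum.elim (fun i => x (i-1)) (fun i => a (i-1) ⊗ₜ[K] a i) with hg0
  set g : Λ →ₗ[K] TensorProduct K Λ Λ := bas.constr K g0 with hg
  have hgbas : ∀ j, g (bas j) = g0 j := fun j => bas.constr_basis K g0 j
  have hge : ∀ i, g (e i) = x (i-1) := fun i => by rw [← hbe i]; exact hgbas (Sum.inl i)
  have hga : ∀ i, g (a i) = a (i-1) ⊗ₜ[K] a i := fun i => by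
    conv_lhs => rw [← hba i]
    exact hgbas (Sum.inr i)
  have hrange0 : Set.range g0 = (Set.range x) ∪ (Set.range fun i => a i ⊗ₜ[K] a (i+1)) := by
    apply Set.Subset.antisymm
    · rintro t ⟨j, rfl⟩
      rcases j with i | i
      · exact Or.inl ⟨i - 1, rfl⟩
      · refine Or.inr ⟨i - 1, ?_⟩
        simp only [hg0, Sum.elim_inr, hm1]
    · rintro t (⟨i, rfl⟩ | ⟨i, rfl⟩)
      · exact ⟨Sum.inl (i+1), by simp only [hg0, Sum.elim_inl, hp1]⟩
      · exact ⟨Sum.inr (i+1), by simp only [hg0, Sum.elim_inr, hp1]⟩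
  have hrange : LinearMap.range g = Ker := by
    rw [hg, Module.Basis.constr_range, hrange0, ← hM, hKerM]
  -- injectivity via a left inverse
  set h0 : ((ZMod n ⊕ ZMod n) × (ZMod n ⊕ ZMod n)) → Λ := fun pq =>
    Sum.elim (fun _ => (0:Λ))
      (fun m => Sum.elim (fun q => if q = m+1 then e (m+1) else 0)
        (fun q => if q = m+1 then a (m+1) else 0) pq.2) pq.1 with hh0
  set h : TensorProduct K Λ Λ →ₗ[K] Λ := B.constr K h0 with hh
  have hcomp : h ∘ₗ g = LinearMap.id := by
    apply bas.ext
    intro j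
    rcases j with i | i
    · rw [LinearMap.comp_apply, hgbas, LinearMap.id_apply]
      simp only [hg0, Sum.elim_inl]
      rw [hBx (i-1), map_sub, hh, B.constr_basis, B.constr_basis, hm1]
      simp [hh0, hbe, hm1]
    · rw [LinearMap.comp_apply, hgbas, LinearMap.id_apply]
      simp only [hg0, Sum.elim_inr]
      rw [hBy' i, hh, B.constr_basis]
      simp [hh0, hba, hm1]
  have hginj : Function.Injective g := by
    intro u w huw
    have h1 : (h ∘ₗ g) u = (h ∘ₗ g) w := by
      rw [LinearMap.comp_apply, LinearMap.comp_apply, huw]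
    rw [hcomp] at h1
    exact h1
  have hμb : ∀ b : Λ, bas.repr (μbar b) =
      (∑ i : ZMod n, bas.repr b (Sum.inl i) • Finsupp.single (Sum.inl (i+1)) (1:K))
      - ∑ i : ZMod n, bas.repr b (Sum.inr i) • Finsupp.single (Sum.inr (i+1)) (1:K) := by
    intro b
    conv_lhs => rw [← bas.sum_repr b]
    rw [map_sum, map_sum, Fintype.sum_sum_type]
    rw [sub_eq_add_neg, ← Finset.sum_neg_distrib]
    congr 1
    · apply Finset.sum_congr rfl
      intro i _
      rw [map_smul, map_smul, hbe, hμe, hre]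
    · apply Finset.sum_congr rfl
      intro i _
      rw [map_smul, map_smul, hba, hμa, map_neg, hra, smul_neg]
  have hμrl : ∀ (b : Λ) (i : ZMod n),
      bas.repr (μbar b) (Sum.inl i) = bas.repr b (Sum.inl (i-1)) := by
    intro b i
    rw [hμb]
    have key : ∀ j : ZMod n, (j + 1 = i) ↔ (j = i - 1) := fun j =>
      ⟨fun h => by rw [← h]; ring, fun h => by rw [h]; ring⟩
    simp [Finsupp.sub_apply, Finsupp.finset_sum_apply, Finsupp.smul_apply,
      Finsupp.single_apply, key]
  have hμrr : ∀ (b : Λ) (i : ZMod n),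
      bas.repr (μbar b) (Sum.inr i) = -(bas.repr b (Sum.inr (i-1))) := by
    intro b i
    rw [hμb]
    have key : ∀ j : ZMod n, (j + 1 = i) ↔ (j = i - 1) := fun j =>
      ⟨fun h => by rw [← h]; ring, fun h => by rw [h]; ring⟩
    simp [Finsupp.sub_apply, Finsupp.finset_sum_apply, Finsupp.smul_apply,
      Finsupp.single_apply, key]
  have eqLs : ∀ b : Λ, g ∘ₗ (LinearMap.mulLeft K (μbar b)) = (lAct K Λ b) ∘ₗ g := by
    intro b
    apply bas.ext
    intro j
    rcases j with i | i
    · rw [LinearMap.comp_apply, LinearMap.comp_apply, LinearMap.mulLeft_apply, hbe,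
        L2 (μbar b) i, map_add, map_smul, map_smul, hge, hga, hμrl, hμrr, F1]
      module
    · rw [LinearMap.comp_apply, LinearMap.comp_apply, LinearMap.mulLeft_apply, hba,
        L1 (μbar b) i, map_smul, hga, hμrl]
      have F3' := F3 b (i-1)
      rw [hm1] at F3'
      rw [F3']
  have eqRs : ∀ b : Λ, g ∘ₗ (LinearMap.mulRight K b) = (rAct K Λ b) ∘ₗ g := by
    intro b
    apply bas.ext
    intro j
    rcases j with i | i
    · rw [LinearMap.comp_apply, LinearMap.comp_apply, LinearMap.mulRight_apply, hbe,
        L4 b i, map_add, map_smul, map_smul, hge, hga]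
      have F2' := F2 b (i-1)
      rw [hm1] at F2'
      rw [F2']
    · rw [LinearMap.comp_apply, LinearMap.comp_apply, LinearMap.mulRight_apply, hba,
        L3 b i, map_smul, hga]
      have F4' := F4 b (i-1)
      rw [hm1, show i - 1 + 2 = i + 1 from by ring] at F4'
      rw [F4']
  refine ⟨by rw [hKerM]; exact hSbc.symm, by rw [hKerM]; exact hSb.symm,
    by rw [hKerM]; exact hSc.symm, indepL, indepR, g, hginj, hrange, ?_, ?_⟩
  · intro b z
    have := LinearMap.congr_fun (eqLs b) z
    simpa using this
  · intro b z
    have := LinearMap.congr_fun (eqRs b) z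
    simpa using this
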